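/- arXiv:2507.16859 — 2 statements merged into one kernel-verified Lean document; each statement's English description precedes it below -/
import Mathlib

section
/- Let P and Q be probability measures on α × β, where α is a measurable space and β is a measurable space with measurable singletons, and let f, f* : α → β be measurable functions such that all relevant disagreement sets are measurable. Let R_P(h) := (P {p | h p.1 ≠ p.2}).toReal and R_Q(h) := (Q {p | h p.1 ≠ p.2}).toReal denote 0-1 risks, and let D_P(h, h') := ((P.map Prod.fst) {x | h x ≠ h' x}).toReal and D_Q(h, h') := ((Q.map Prod.fst) {x | h x ≠ h' x}).toReal denote disparities under the respective first-coordinate marginals. Suppose d : ℝ satisfies |D_P(f, f*) − D_Q(f, f*)| ≤ d. Then R_P(f) ≤ R_Q(f) + (R_P(f*) + R_Q(f*)) + d. -/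
open MeasureTheory

lemma toReal_triangle_aux {γ : Type*} [MeasurableSpace γ] (μ : Measure γ)
    [IsProbabilityMeasure μ] (s t u : Set γ) (h : s ⊆ t ∪ u) :
    (μ s).toReal ≤ (μ t).toReal + (μ u).toReal := by
  have h1 : μ s ≤ μ t + μ u := le_trans (measure_mono h) (measure_union_le t u)
  have ht := measure_ne_top μ t
  have hu := measure_ne_top μ u
  calc (μ s).toReal ≤ (μ t + μ u).toReal := ENNReal.toReal_mono (by finiteness) h1
    _ = (μ t).toReal + (μ u).toReal := ENNReal.toReal_add ht hu

/-- Target-risk bound via an ideal joint classifier: the 0-1 risk of `f` under `P` is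
bounded by its risk under `Q`, plus the ideal joint risk of `f*`, plus a bound `d` on
the difference of the disparities of `f` and `f*` under the two input marginals. -/
theorem risk_bound_via_ideal_classifier
    {α β : Type*} [MeasurableSpace α] [MeasurableSpace β] [MeasurableSingletonClass β]
    (P Q : Measure (α × β)) [IsProbabilityMeasure P] [IsProbabilityMeasure Q]
    (f fstar : α → β) (hf : Measurable f) (hfstar : Measurable fstar)
    (hfP : MeasurableSet {p : α × β | f p.1 ≠ p.2})
    (hfstarP : MeasurableSet {p : α × β | fstar p.1 ≠ p.2})
    (hdis : MeasurableSet {x : α | f x ≠ fstar x})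
    (d : ℝ)
    (hd : |((P.map Prod.fst) {x : α | f x ≠ fstar x}).toReal
            - ((Q.map Prod.fst) {x : α | f x ≠ fstar x}).toReal| ≤ d) :
    (P {p : α × β | f p.1 ≠ p.2}).toReal
      ≤ (Q {p : α × β | f p.1 ≠ p.2}).toReal
        + ((P {p : α × β | fstar p.1 ≠ p.2}).toReal
            + (Q {p : α × β | fstar p.1 ≠ p.2}).toReal)
        + d := by
  have hmapP : (P.map Prod.fst) {x : α | f x ≠ fstar x}
      = P {p : α × β | f p.1 ≠ fstar p.1} := by
    rw [Measure.map_apply measurable_fst hdis]; rfl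
  have hmapQ : (Q.map Prod.fst) {x : α | f x ≠ fstar x}
      = Q {p : α × β | f p.1 ≠ fstar p.1} := by
    rw [Measure.map_apply measurable_fst hdis]; rfl
  -- R_P(f) ≤ R_P(f*) + D_P(f,f*)
  have h1 : (P {p : α × β | f p.1 ≠ p.2}).toReal
      ≤ (P {p : α × β | fstar p.1 ≠ p.2}).toReal
        + (P {p : α × β | f p.1 ≠ fstar p.1}).toReal := by
    apply toReal_triangle_aux
    intro p hp
    by_cases h : fstar p.1 = p.2
    · right; simp only [Set.mem_setOf_eq] at *; rw [h]; exact hp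
    · left; exact h
  -- D_Q(f,f*) ≤ R_Q(f) + R_Q(f*)
  have h2 : (Q {p : α × β | f p.1 ≠ fstar p.1}).toReal
      ≤ (Q {p : α × β | f p.1 ≠ p.2}).toReal
        + (Q {p : α × β | fstar p.1 ≠ p.2}).toReal := by
    apply toReal_triangle_aux
    intro p hp
    by_cases h : f p.1 = p.2
    · right; simp only [Set.mem_setOf_eq] at *; rw [← h]; exact fun e => hp e.symm
    · left; exact h
  -- D_P ≤ D_Q + d
  have h3 : (P {p : α × β | f p.1 ≠ fstar p.1}).toReal
      ≤ (Q {p : α × β | f p.1 ≠ fstar p.1}).toReal + d := by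
    rw [← hmapP, ← hmapQ]
    have := abs_le.mp hd
    linarith [this.2]
  linarith
end

section
/- Let μ be a probability measure on a measurable space α, and let ν₁, ν₂ be probability measures on a measurable space β. Suppose ε : ℝ satisfies |(ν₁ B).toReal − (ν₂ B).toReal| ≤ ε for every measurable set B ⊆ β. Then for every measurable set S ⊆ α × β, |((μ.prod ν₁) S).toReal − ((μ.prod ν₂) S).toReal| ≤ ε. In particular, for any two classifiers f, f' : α × β → γ with measurable disagreement set S = {p | f p ≠ f' p}, the disparity of f and f' under the joint distribution of (x, a) with x ~ μ, a ~ ν₁ independent, and under the joint distribution of (x, â) with x ~ μ, â ~ ν₂ independent, differ by at most ε. -/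
open MeasureTheory

/-- If the distributions of the true sensor `ν₁` and the generated sensor `ν₂` differ by at
most `ε` on every measurable set, then the corresponding independent joint distributions
with a common input distribution `μ` differ by at most `ε` on every measurable set; in
particular, the disparity of any two classifiers under the two joint distributions differs
by at most `ε`. -/
theorem prod_measure_abs_diff_le_of_abs_diff_le
    {α β γ : Type*} [MeasurableSpace α] [MeasurableSpace β]
    (μ : Measure α) [IsProbabilityMeasure μ]
    (ν₁ ν₂ : Measure β) [IsProbabilityMeasure ν₁] [IsProbabilityMeasure ν₂]
    (ε : ℝ)
    (hε : ∀ B : Set β, MeasurableSet B → |(ν₁ B).toReal - (ν₂ B).toReal| ≤ ε) :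
    (∀ S : Set (α × β), MeasurableSet S →
        |((μ.prod ν₁) S).toReal - ((μ.prod ν₂) S).toReal| ≤ ε) ∧
      (∀ f f' : α × β → γ, MeasurableSet {p : α × β | f p ≠ f' p} →
        |((μ.prod ν₁) {p : α × β | f p ≠ f' p}).toReal
            - ((μ.prod ν₂) {p : α × β | f p ≠ f' p}).toReal| ≤ ε) := by
  have main : ∀ S : Set (α × β), MeasurableSet S →
      |((μ.prod ν₁) S).toReal - ((μ.prod ν₂) S).toReal| ≤ ε := by
    intro S hS
    set F : α → ℝ := fun x => (ν₁ (Prod.mk x ⁻¹' S)).toReal with hF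
    set G : α → ℝ := fun x => (ν₂ (Prod.mk x ⁻¹' S)).toReal with hG
    have hmeas₁ : Measurable fun x => ν₁ (Prod.mk x ⁻¹' S) :=
      measurable_measure_prodMk_left hS
    have hmeas₂ : Measurable fun x => ν₂ (Prod.mk x ⁻¹' S) :=
      measurable_measure_prodMk_left hS
    have hFmeas : Measurable F := hmeas₁.ennreal_toReal
    have hGmeas : Measurable G := hmeas₂.ennreal_toReal
    have hFb : ∀ x, ‖F x‖ ≤ 1 := by
      intro x
      simp only [hF, Real.norm_eq_abs, abs_of_nonneg ENNReal.toReal_nonneg]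
      exact ENNReal.toReal_le_of_le_ofReal one_pos.le (by simpa using prob_le_one)
    have hGb : ∀ x, ‖G x‖ ≤ 1 := by
      intro x
      simp only [hG, Real.norm_eq_abs, abs_of_nonneg ENNReal.toReal_nonneg]
      exact ENNReal.toReal_le_of_le_ofReal one_pos.le (by simpa using prob_le_one)
    have hFint : Integrable F μ :=
      ⟨hFmeas.aestronglyMeasurable,
        HasFiniteIntegral.of_bounded (C := 1) (Filter.Eventually.of_forall hFb)⟩
    have hGint : Integrable G μ :=
      ⟨hGmeas.aestronglyMeasurable,
        HasFiniteIntegral.of_bounded (C := 1) (Filter.Eventually.of_forall hGb)⟩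
    have h₁ : ((μ.prod ν₁) S).toReal = ∫ x, F x ∂μ := by
      rw [Measure.prod_apply hS,
        integral_toReal hmeas₁.aemeasurable
          (Filter.Eventually.of_forall fun x => (measure_lt_top _ _))]
    have h₂ : ((μ.prod ν₂) S).toReal = ∫ x, G x ∂μ := by
      rw [Measure.prod_apply hS,
        integral_toReal hmeas₂.aemeasurable
          (Filter.Eventually.of_forall fun x => (measure_lt_top _ _))]
    rw [h₁, h₂, ← integral_sub hFint hGint]
    calc |∫ x, (F x - G x) ∂μ| ≤ ∫ x, |F x - G x| ∂μ := by
          simpa using norm_integral_le_integral_norm (fun x => F x - G x)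
      _ ≤ ∫ _x, ε ∂μ := by
          refine integral_mono ((hFint.sub hGint).abs) (integrable_const ε) ?_
          intro x
          exact hε _ (measurable_prodMk_left hS)
      _ = ε := by simp
  exact ⟨main, fun f f' h => main _ h⟩
end
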